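/- arXiv:1701.04890 — 2 statements merged into one kernel-verified Lean document; each statement's English description precedes it below -/
import Mathlib

section
/- Let X₁, X₂ : Polynomial ℂ with X₁.coeff 0 ≠ 0, X₂.coeff 0 ≠ 0, natDegree X₁ = d₁, natDegree X₂ = d₂, and IsCoprime X₁ X₂. Suppose Y₁, Y₂ : Polynomial ℂ satisfy natDegree Y₁ ≤ d₁, natDegree Y₂ ≤ d₂, and the correlation measurements agree: Y₁ * Y₁⋆[d₁] = X₁ * X₁⋆[d₁], Y₂ * Y₂⋆[d₂] = X₂ * X₂⋆[d₂], and Y₁ * Y₂⋆[d₂] = X₁ * X₂⋆[d₂]. Then there exists c : ℂ with Complex.abs c = 1 such that Y₁ = c • X₁ and Y₂ = c • X₂. (Identifiability up to a global phase from the two autocorrelations and one cross-correlation.) -/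
/-- The conjugate-reciprocal of `P` with respect to `N`. -/
noncomputable def creflect (N : ℕ) (P : Polynomial ℂ) : Polynomial ℂ :=
  Polynomial.reflect N (P.map (starRingEnd ℂ))

lemma creflect_coeff_top (N : ℕ) (P : Polynomial ℂ) :
    (creflect N P).coeff N = (starRingEnd ℂ) (P.coeff 0) := by
  simp [creflect, Polynomial.coeff_reflect, Polynomial.revAt_le (le_refl N)]

lemma creflect_ne_zero (N : ℕ) (P : Polynomial ℂ) (h : P.coeff 0 ≠ 0) :
    creflect N P ≠ 0 := by
  intro h0
  apply h
  have := creflect_coeff_top N P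
  rw [h0] at this
  simpa using this.symm

lemma creflect_C_mul (N : ℕ) (c : ℂ) (P : Polynomial ℂ) :
    creflect N (Polynomial.C c * P) = Polynomial.C ((starRingEnd ℂ) c) * creflect N P := by
  simp [creflect, Polynomial.map_mul, Polynomial.reflect_C_mul]

/-- Identifiability up to a global phase from the two autocorrelations and one
cross-correlation, for coprime `X₁, X₂`. -/
theorem phase_retrieval_uniqueness (X₁ X₂ Y₁ Y₂ : Polynomial ℂ) (d₁ d₂ : ℕ)
    (h₁ : X₁.coeff 0 ≠ 0) (h₂ : X₂.coeff 0 ≠ 0)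
    (hd₁ : X₁.natDegree = d₁) (hd₂ : X₂.natDegree = d₂)
    (hcop : IsCoprime X₁ X₂)
    (hY₁ : Y₁.natDegree ≤ d₁) (hY₂ : Y₂.natDegree ≤ d₂)
    (ha₁ : Y₁ * creflect d₁ Y₁ = X₁ * creflect d₁ X₁)
    (ha₂ : Y₂ * creflect d₂ Y₂ = X₂ * creflect d₂ X₂)
    (hc : Y₁ * creflect d₂ Y₂ = X₁ * creflect d₂ X₂) :
    ∃ c : ℂ, ‖c‖ = 1 ∧ Y₁ = c • X₁ ∧ Y₂ = c • X₂ := by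
  have hX₁ : X₁ ≠ 0 := fun h => h₁ (by simp [h])
  have hX₂ : X₂ ≠ 0 := fun h => h₂ (by simp [h])
  have hA : creflect d₁ X₁ ≠ 0 := creflect_ne_zero _ _ h₁
  have hB : creflect d₂ X₂ ≠ 0 := creflect_ne_zero _ _ h₂
  -- key cancellation: Y₁ * X₂ = X₁ * Y₂
  have key : Y₁ * X₂ = X₁ * Y₂ := by
    have h : (Y₁ * X₂) * creflect d₂ X₂ = (X₁ * Y₂) * creflect d₂ X₂ := by
      calc (Y₁ * X₂) * creflect d₂ X₂ = Y₁ * (X₂ * creflect d₂ X₂) := by ring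
        _ = Y₁ * (Y₂ * creflect d₂ Y₂) := by rw [ha₂]
        _ = (Y₁ * creflect d₂ Y₂) * Y₂ := by ring
        _ = (X₁ * creflect d₂ X₂) * Y₂ := by rw [hc]
        _ = (X₁ * Y₂) * creflect d₂ X₂ := by ring
    exact mul_right_cancel₀ hB h
  have hY₁ne : Y₁ ≠ 0 := by
    intro h
    rw [h, zero_mul] at ha₁
    exact (mul_ne_zero hX₁ hA) ha₁.symm
  have hdvd : X₁ ∣ Y₁ := hcop.dvd_of_dvd_mul_right ⟨Y₂, key⟩
  obtain ⟨q, hq⟩ := hdvd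
  have hqne : q ≠ 0 := by rintro rfl; simp [hq] at hY₁ne
  have hqdeg : q.natDegree = 0 := by
    have := Polynomial.natDegree_mul hX₁ hqne
    rw [← hq] at this
    omega
  obtain ⟨c, rfl⟩ := Polynomial.natDegree_eq_zero.mp hqdeg
  have hcne : c ≠ 0 := by
    intro h
    rw [h] at hq
    simp [hq] at hY₁ne
  have hY₁eq : Y₁ = Polynomial.C c * X₁ := by rw [hq]; ring
  have hY₂eq : Y₂ = Polynomial.C c * X₂ := by
    have h : X₁ * Y₂ = X₁ * (Polynomial.C c * X₂) := by rw [← key, hY₁eq]; ring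
    exact mul_left_cancel₀ hX₁ h
  -- deduce |c| = 1 from ha₁
  have habs : c * (starRingEnd ℂ) c = 1 := by
    rw [hY₁eq, creflect_C_mul] at ha₁
    have h : Polynomial.C (c * (starRingEnd ℂ) c) * (X₁ * creflect d₁ X₁)
        = Polynomial.C 1 * (X₁ * creflect d₁ X₁) := by
      rw [Polynomial.C_mul, Polynomial.C_1, one_mul]
      linear_combination ha₁
    have := mul_right_cancel₀ (mul_ne_zero hX₁ hA) h
    exact Polynomial.C_injective this
  refine ⟨c, ?_, ?_, ?_⟩
  · have : Complex.normSq c = 1 := by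
      have := habs
      rw [Complex.mul_conj] at this
      exact_mod_cast this
    have h2 : ‖c‖ ^ 2 = 1 := by rw [Complex.sq_norm, this]
    nlinarith [norm_nonneg c]
  · rw [hY₁eq, Polynomial.smul_eq_C_mul]
  · rw [hY₂eq, Polynomial.smul_eq_C_mul]
end

section
/- Every nonzero self-reciprocal polynomial factors into irreducible self-reciprocal polynomials: if S : Polynomial ℂ is nonzero and S⋆[natDegree S] = S, then there exists a multiset l of polynomials over ℂ such that every P ∈ l is self-reciprocal with respect to natDegree P and has natDegree P ≤ 2, and S = l.prod. -/
open Polynomial Complex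

lemma coeff_creflect (N : ℕ) (P : Polynomial ℂ) (i : ℕ) :
    (creflect N P).coeff i = (starRingEnd ℂ) (P.coeff (revAt N i)) := by
  simp [creflect, coeff_reflect, coeff_map]

lemma creflect_mul (P Q : Polynomial ℂ) :
    creflect (P.natDegree + Q.natDegree) (P * Q) =
      creflect P.natDegree P * creflect Q.natDegree Q := by
  unfold creflect
  rw [Polynomial.map_mul]
  exact reflect_mul _ _ natDegree_map_le natDegree_map_le

lemma quotient_sr {S T Q : Polynomial ℂ} (hT : T ≠ 0) (hQ : Q ≠ 0)
    (hSTQ : S = T * Q) (hTsr : creflect T.natDegree T = T)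
    (hsr : creflect S.natDegree S = S) : creflect Q.natDegree Q = Q := by
  have key : creflect (T * Q).natDegree (T * Q) = T * Q := by rw [← hSTQ]; exact hsr
  rw [natDegree_mul hT hQ, creflect_mul, hTsr] at key
  exact mul_left_cancel₀ hT key

lemma lin_sr (u z : ℂ) (hu : u * (starRingEnd ℂ) u = 1) (hz : z = -u^2) :
    creflect 1 (C ((starRingEnd ℂ) u) * (X - C z)) = C ((starRingEnd ℂ) u) * (X - C z) := by
  ext n
  rw [coeff_creflect]
  match n with
  | 0 =>
    simp only [revAt_le (by norm_num : (0:ℕ) ≤ 1)]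
    simp only [coeff_C_mul, coeff_sub, coeff_X, coeff_C]
    norm_num
    subst hz
    linear_combination (-u) * hu
  | 1 =>
    simp only [revAt_le (by norm_num : (1:ℕ) ≤ 1)]
    simp only [coeff_C_mul, coeff_sub, coeff_X, coeff_C]
    norm_num
    subst hz
    simp only [map_neg, map_pow]
    linear_combination ((starRingEnd ℂ) u) * hu
  | (n+2) =>
    rw [revAt_eq_self_of_lt (by omega)]
    simp [coeff_C_mul, coeff_sub, coeff_X, coeff_C]

lemma quad_sr (u z : ℂ) (hu : u * (starRingEnd ℂ) u = 1) (hz : z ≠ 0)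
    (hz2 : z = u^2 * (starRingEnd ℂ) z) :
    creflect 2 (C ((starRingEnd ℂ) u) *
        ((X - C z) * (X - C (((starRingEnd ℂ) z)⁻¹)))) =
      C ((starRingEnd ℂ) u) * ((X - C z) * (X - C (((starRingEnd ℂ) z)⁻¹))) := by
  have hk : (starRingEnd ℂ) z ≠ 0 := by simpa using hz
  have key : u * (starRingEnd ℂ) z = (starRingEnd ℂ) u * z := by
    calc u * (starRingEnd ℂ) z = (u * (starRingEnd ℂ) u) * (u * (starRingEnd ℂ) z) := by
          rw [hu, one_mul]
      _ = (starRingEnd ℂ) u * (u^2 * (starRingEnd ℂ) z) := by ring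
      _ = (starRingEnd ℂ) u * z := by rw [← hz2]
  have e0 : u = (starRingEnd ℂ) u * (z * ((starRingEnd ℂ) z)⁻¹) := by
    field_simp
    linear_combination key
  have e2 : u * ((starRingEnd ℂ) z * z⁻¹) = (starRingEnd ℂ) u := by
    field_simp
    linear_combination key
  have e1 : u * ((starRingEnd ℂ) z + z⁻¹) = (starRingEnd ℂ) u * (z + ((starRingEnd ℂ) z)⁻¹) := by
    field_simp
    linear_combination ((starRingEnd ℂ) z * z + 1) * key
  have hexp : C ((starRingEnd ℂ) u) * ((X - C z) * (X - C (((starRingEnd ℂ) z)⁻¹))) =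
      C ((starRingEnd ℂ) u) * X^2 - C ((starRingEnd ℂ) u * (z + ((starRingEnd ℂ) z)⁻¹)) * X
        + C ((starRingEnd ℂ) u * (z * ((starRingEnd ℂ) z)⁻¹)) := by
    rw [C_mul, C_mul, C_add, C_mul]
    ring
  rw [hexp]
  ext n
  rw [coeff_creflect]
  have hcoeff : ∀ m, (C ((starRingEnd ℂ) u) * X^2
      - C ((starRingEnd ℂ) u * (z + ((starRingEnd ℂ) z)⁻¹)) * X
      + C ((starRingEnd ℂ) u * (z * ((starRingEnd ℂ) z)⁻¹))).coeff m
      = (if m = 2 then (starRingEnd ℂ) u else 0)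
        - (if m = 1 then (starRingEnd ℂ) u * (z + ((starRingEnd ℂ) z)⁻¹) else 0)
        + (if m = 0 then (starRingEnd ℂ) u * (z * ((starRingEnd ℂ) z)⁻¹) else 0) := by
    intro m
    simp only [coeff_add, coeff_sub, coeff_C_mul, coeff_X_pow, coeff_X, coeff_C,
      mul_ite, mul_one, mul_zero]
    simp [eq_comm]
  rw [hcoeff, hcoeff]
  match n with
  | 0 =>
    rw [revAt_le (by norm_num : (0:ℕ) ≤ 2)]
    norm_num
    simpa using e0
  | 1 =>
    rw [revAt_le (by norm_num : (1:ℕ) ≤ 2)]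
    norm_num
    simpa using e1
  | 2 =>
    rw [revAt_le (by norm_num : (2:ℕ) ≤ 2)]
    norm_num
    simpa using e2
  | (n+3) =>
    rw [revAt_eq_self_of_lt (by omega)]
    simp [show ¬(n+3 = 2) by omega, show ¬(n+3 = 1) by omega]

lemma root_transfer {S : Polynomial ℂ} {N : ℕ} (h : creflect N S = S)
    (hN : S.natDegree ≤ N) {z : ℂ} (hz : z ≠ 0) (hr : S.eval z = 0) :
    S.eval (((starRingEnd ℂ) z)⁻¹) = 0 := by
  have hk : (starRingEnd ℂ) z ≠ 0 := by simpa using hz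
  letI : Invertible ((starRingEnd ℂ) z) := invertibleOfNonzero hk
  have hf : (S.map (starRingEnd ℂ)).natDegree ≤ N := le_trans natDegree_map_le hN
  have h2 : eval₂ (RingHom.id ℂ) ((starRingEnd ℂ) z) (S.map (starRingEnd ℂ)) = 0 := by
    rw [show eval₂ (RingHom.id ℂ) ((starRingEnd ℂ) z) (S.map (starRingEnd ℂ)) =
      eval ((starRingEnd ℂ) z) (S.map (starRingEnd ℂ)) from rfl]
    rw [eval_map, eval₂_hom, hr, map_zero]
  have h3 := (eval₂_reflect_eq_zero_iff (RingHom.id ℂ) ((starRingEnd ℂ) z) N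
    (S.map (starRingEnd ℂ)) hf).mpr h2
  rw [show eval₂ (RingHom.id ℂ) (⅟((starRingEnd ℂ) z)) (reflect N (S.map (starRingEnd ℂ))) =
    eval (⅟((starRingEnd ℂ) z)) (reflect N (S.map (starRingEnd ℂ))) from rfl] at h3
  rw [invOf_eq_inv] at h3
  rw [show reflect N (S.map (starRingEnd ℂ)) = S from h] at h3
  exact h3

lemma unit_of_sq (u : ℂ) (h : (u * (starRingEnd ℂ) u)^2 = 1) :
    u * (starRingEnd ℂ) u = 1 := by
  have h1 : ((normSq u : ℂ))^2 = 1 := by rw [← Complex.mul_conj]; exact h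
  have h2 : (normSq u)^2 = 1 := by exact_mod_cast h1
  have h3 : normSq u = 1 := by nlinarith [normSq_nonneg u]
  rw [Complex.mul_conj, h3]; norm_num

lemma sr_aux : ∀ (n : ℕ) (S : Polynomial ℂ), S ≠ 0 → S.natDegree = n →
    creflect S.natDegree S = S →
    ∃ l : Multiset (Polynomial ℂ),
      (∀ P ∈ l, creflect P.natDegree P = P ∧ P.natDegree ≤ 2) ∧ S = l.prod := by
  intro n
  induction n using Nat.strong_induction_on with
  | _ n IH =>
  intro S hS hdeg hsr
  rcases Nat.eq_zero_or_pos n with hn0 | hn1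
  · refine ⟨{S}, ?_, by simp⟩
    intro P hP
    rw [Multiset.mem_singleton] at hP
    subst hP
    exact ⟨hsr, by omega⟩
  · -- find a root
    have hdpos : 0 < S.degree := natDegree_pos_iff_degree_pos.mp (by omega)
    obtain ⟨z, hz⟩ := Complex.exists_root hdpos
    have hz0 : z ≠ 0 := by
      intro h0
      subst h0
      have hc0 : S.coeff 0 = (starRingEnd ℂ) (S.coeff S.natDegree) := by
        conv_lhs => rw [← hsr]
        rw [coeff_creflect, revAt_le (Nat.zero_le _), Nat.sub_zero]
      have hlc : S.coeff S.natDegree ≠ 0 := by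
        rw [coeff_natDegree]
        exact leadingCoeff_ne_zero.mpr hS
      have : S.coeff 0 ≠ 0 := by
        rw [hc0]
        simpa using hlc
      rw [IsRoot, ← coeff_zero_eq_eval_zero] at hz
      exact this hz
    have hkz : (starRingEnd ℂ) z ≠ 0 := by simpa using hz0
    by_cases hcase : z * (starRingEnd ℂ) z = 1
    · -- |z| = 1 : linear factor
      obtain ⟨u, hu2⟩ := IsAlgClosed.exists_pow_nat_eq (-z) (n := 2) (by norm_num)
      have hu : u * (starRingEnd ℂ) u = 1 := by
        apply unit_of_sq
        have : u^2 * (starRingEnd ℂ) (u^2) = 1 := by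
          rw [hu2]
          simp only [map_neg]
          linear_combination hcase
        rw [map_pow] at this
        linear_combination this
      have hu0 : (starRingEnd ℂ) u ≠ 0 := by
        intro h
        rw [h, mul_zero] at hu
        exact one_ne_zero hu.symm
      set T : Polynomial ℂ := C ((starRingEnd ℂ) u) * (X - C z) with hT
      have hTsr : creflect 1 T = T := lin_sr u z hu (by rw [hu2]; ring)
      have hTdeg : T.natDegree = 1 := by
        rw [hT, natDegree_C_mul hu0, natDegree_X_sub_C]
      have hTne : T ≠ 0 := by
        rw [hT]
        exact mul_ne_zero (by simpa using hu0) (X_sub_C_ne_zero z)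
      obtain ⟨Q, hQ⟩ := (dvd_iff_isRoot).mpr hz
      set Q' : Polynomial ℂ := C ((starRingEnd ℂ) u)⁻¹ * Q with hQ'
      have hSTQ : S = T * Q' := by
        rw [hT, hQ', hQ]
        rw [mul_mul_mul_comm, ← C_mul, mul_inv_cancel₀ hu0, C_1, one_mul]
      have hQ'ne : Q' ≠ 0 := by
        intro h
        rw [h, mul_zero] at hSTQ
        exact hS hSTQ
      have hQ'sr : creflect Q'.natDegree Q' = Q' :=
        quotient_sr hTne hQ'ne hSTQ (by rw [hTdeg]; exact hTsr) hsr
      have hdQ : Q'.natDegree = n - 1 := by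
        have := natDegree_mul hTne hQ'ne
        rw [← hSTQ, hTdeg, hdeg] at this
        omega
      obtain ⟨l, hl, hlprod⟩ := IH (n - 1) (by omega) Q' hQ'ne hdQ hQ'sr
      refine ⟨T ::ₘ l, ?_, ?_⟩
      · intro P hP
        rw [Multiset.mem_cons] at hP
        rcases hP with rfl | hP
        · exact ⟨by rw [hTdeg]; exact hTsr, by omega⟩
        · exact hl P hP
      · rw [Multiset.prod_cons, ← hlprod, ← hSTQ]
    · -- |z| ≠ 1 : quadratic factor
      set w : ℂ := ((starRingEnd ℂ) z)⁻¹ with hw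
      have hwroot : S.eval w = 0 := root_transfer hsr (le_of_eq rfl) hz0 hz
      have hwz : w ≠ z := by
        intro h
        apply hcase
        rw [hw] at h
        field_simp at h
        linear_combination -h
      obtain ⟨Q1, hQ1⟩ := (dvd_iff_isRoot).mpr hz
      have hQ1w : Q1.eval w = 0 := by
        have := hwroot
        rw [hQ1, eval_mul, eval_sub, eval_X, eval_C] at this
        rcases mul_eq_zero.mp this with h | h
        · exact absurd (by linear_combination h : w = z) hwz
        · exact h
      obtain ⟨Q2, hQ2⟩ := (dvd_iff_isRoot (p := Q1)).mpr hQ1w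
      obtain ⟨u, hu2⟩ := IsAlgClosed.exists_pow_nat_eq (z * ((starRingEnd ℂ) z)⁻¹) (n := 2)
        (by norm_num)
      have hu : u * (starRingEnd ℂ) u = 1 := by
        apply unit_of_sq
        have : u^2 * (starRingEnd ℂ) (u^2) = 1 := by
          rw [hu2]
          simp only [map_mul, map_inv₀, Complex.conj_conj]
          field_simp
        rw [map_pow] at this
        linear_combination this
      have hu0 : (starRingEnd ℂ) u ≠ 0 := by
        intro h
        rw [h, mul_zero] at hu
        exact one_ne_zero hu.symm
      have hz2 : z = u^2 * (starRingEnd ℂ) z := by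
        rw [hu2]
        field_simp
      set T : Polynomial ℂ := C ((starRingEnd ℂ) u) * ((X - C z) * (X - C w)) with hT
      have hTsr : creflect 2 T = T := quad_sr u z hu hz0 hz2
      have hTdeg : T.natDegree = 2 := by
        rw [hT, natDegree_C_mul hu0, natDegree_mul (X_sub_C_ne_zero z) (X_sub_C_ne_zero w),
          natDegree_X_sub_C, natDegree_X_sub_C]
      have hTne : T ≠ 0 := by
        rw [hT]
        exact mul_ne_zero (by simpa using hu0)
          (mul_ne_zero (X_sub_C_ne_zero z) (X_sub_C_ne_zero w))
      set Q' : Polynomial ℂ := C ((starRingEnd ℂ) u)⁻¹ * Q2 with hQ'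
      have hSTQ : S = T * Q' := by
        rw [hT, hQ', hQ1, hQ2]
        rw [show C ((starRingEnd ℂ) u) * ((X - C z) * (X - C w)) * (C ((starRingEnd ℂ) u)⁻¹ * Q2)
          = (C ((starRingEnd ℂ) u) * C ((starRingEnd ℂ) u)⁻¹) * ((X - C z) * ((X - C w) * Q2))
          from by ring]
        rw [← C_mul, mul_inv_cancel₀ hu0, C_1, one_mul]
      have hQ'ne : Q' ≠ 0 := by
        intro h
        rw [h, mul_zero] at hSTQ
        exact hS hSTQ
      have hQ'sr : creflect Q'.natDegree Q' = Q' :=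
        quotient_sr hTne hQ'ne hSTQ (by rw [hTdeg]; exact hTsr) hsr
      have hdQ : Q'.natDegree = n - 2 := by
        have := natDegree_mul hTne hQ'ne
        rw [← hSTQ, hTdeg, hdeg] at this
        omega
      obtain ⟨l, hl, hlprod⟩ := IH (n - 2) (by omega) Q' hQ'ne hdQ hQ'sr
      refine ⟨T ::ₘ l, ?_, ?_⟩
      · intro P hP
        rw [Multiset.mem_cons] at hP
        rcases hP with rfl | hP
        · exact ⟨by rw [hTdeg]; exact hTsr, by omega⟩
        · exact hl P hP
      · rw [Multiset.prod_cons, ← hlprod, ← hSTQ]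

/-- Every nonzero self-reciprocal polynomial factors into irreducible
self-reciprocal polynomials (of degree at most two). -/
theorem selfReciprocal_factorization (S : Polynomial ℂ) (hS : S ≠ 0)
    (hsr : creflect S.natDegree S = S) :
    ∃ l : Multiset (Polynomial ℂ),
      (∀ P ∈ l, creflect P.natDegree P = P ∧ P.natDegree ≤ 2) ∧ S = l.prod := by
  exact sr_aux S.natDegree S hS rfl hsr
end
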